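/- Let m be an even natural number. Then G(m,a) mod 2 is 4-periodic in each component of a: for every n ≥ 1, every a = (a₁,…,aₙ) ∈ ℤⁿ and every index 1 ≤ j ≤ n, if a′ is defined by a′ᵢ = aᵢ for i ≠ j and a′ⱼ = aⱼ + 4, then G(m, a) ≡ G(m, a′) (mod 2). -/

import Mathlib

open Polynomial

/-- The sum of `j`-th powers of the roots (with multiplicity, in `ℂ`) of
`Xⁿ − a₁Xⁿ⁻¹ + a₂Xⁿ⁻² − ⋯ + (−1)ⁿaₙ`. -/
noncomputable def rootPowerSum (n : ℕ) (a : Fin n → ℤ) (j : ℕ) : ℂ :=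
  ((Polynomial.roots
      (X ^ n + ∑ i : Fin n, C ((-1 : ℂ) ^ ((i : ℕ) + 1) * (a i : ℂ)) * X ^ (n - ((i : ℕ) + 1)))).map
    (fun θ => θ ^ j)).sum

/-- `F(m,a) = Σ_{j ∣ m} (−1)ʲ (sⱼ/j) Π_{p ∣ m/j} (1 − 1/p)`, where `s j` is the `j`-th
power sum of the roots (given here as an abstract integer-valued function). -/
noncomputable def Fval (s : ℕ → ℤ) (m : ℕ) : ℚ :=
  ∑ j ∈ m.divisors,
    (-1 : ℚ) ^ j * (s j : ℚ) / (j : ℚ) *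
      ∏ p ∈ (m / j).primeFactors, (1 - 1 / (p : ℚ))


namespace GAux

open scoped PowerSeries

/-- geometric-type series Σ_{k≥1} θ^k t^k -/
noncomputable def Egeo (θ : ℂ) : ℂ⟦X⟧ := PowerSeries.mk fun k => if k = 0 then 0 else θ ^ k

noncomputable def psumS (M : Multiset ℂ) : ℂ⟦X⟧ :=
  PowerSeries.mk fun k => if k = 0 then 0 else (M.map fun θ => θ ^ k).sum

noncomputable def pprodS (M : Multiset ℂ) : ℂ⟦X⟧ :=
  (M.map fun θ => 1 - PowerSeries.C θ * PowerSeries.X).prod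

lemma Egeo_eq (θ : ℂ) :
    Egeo θ = PowerSeries.C θ * ((1 + Egeo θ) * PowerSeries.X) := by
  ext n
  rw [PowerSeries.coeff_C_mul]
  cases n with
  | zero =>
    simp [Egeo, PowerSeries.coeff_zero_eq_constantCoeff, map_mul, PowerSeries.constantCoeff_X]
  | succ n =>
    rw [PowerSeries.coeff_succ_mul_X]
    simp only [Egeo, PowerSeries.coeff_mk, Nat.succ_ne_zero, if_neg, map_add]
    cases n with
    | zero => simp [PowerSeries.coeff_one]
    | succ k => simp [PowerSeries.coeff_one, pow_succ, mul_comm]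

lemma psumS_cons (θ : ℂ) (M : Multiset ℂ) : psumS (θ ::ₘ M) = Egeo θ + psumS M := by
  ext n
  simp only [psumS, Egeo, PowerSeries.coeff_mk, map_add, Multiset.map_cons, Multiset.sum_cons]
  split_ifs <;> simp

lemma pprodS_star (M : Multiset ℂ) :
    pprodS M * psumS M = -(PowerSeries.X * (PowerSeries.derivative ℂ (pprodS M))) := by
  induction M using Multiset.induction with
  | empty =>
    have h1 : pprodS 0 = 1 := by simp [pprodS]
    have h2 : psumS 0 = 0 := by ext n; simp [psumS]
    rw [h1, h2, mul_zero]
    simp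
  | cons θ M ih =>
    have h1 : pprodS (θ ::ₘ M) = (1 - PowerSeries.C θ * PowerSeries.X) * pprodS M := by
      simp [pprodS, Multiset.map_cons, Multiset.prod_cons]
    have hDlin : PowerSeries.derivative ℂ (1 - PowerSeries.C θ * PowerSeries.X)
        = -(PowerSeries.C θ) := by
      rw [map_sub]
      have : PowerSeries.derivative ℂ (PowerSeries.C θ * PowerSeries.X)
          = PowerSeries.C θ := by
        rw [Derivation.leibniz, PowerSeries.derivative_X, PowerSeries.derivative_C]
        simp [smul_eq_mul]
      rw [this]
      simp
    have hD : PowerSeries.derivative ℂ (pprodS (θ ::ₘ M))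
        = (1 - PowerSeries.C θ * PowerSeries.X) * PowerSeries.derivative ℂ (pprodS M)
          - PowerSeries.C θ * pprodS M := by
      rw [h1, Derivation.leibniz, hDlin]
      simp [smul_eq_mul]; ring
    have hE : Egeo θ - PowerSeries.C θ * PowerSeries.X * Egeo θ
        = PowerSeries.C θ * PowerSeries.X := by
      nth_rewrite 1 [Egeo_eq θ]
      ring
    rw [psumS_cons, hD, h1]
    linear_combination (1 - PowerSeries.C θ * PowerSeries.X) * ih + pprodS M * hE

end GAux

namespace GAux

open scoped PowerSeries

/-- reversal of a polynomial of (nominal) degree `d`, as a power series -/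
noncomputable def revP (q : Polynomial ℂ) (d : ℕ) : ℂ⟦X⟧ :=
  PowerSeries.mk fun i => if i ≤ d then q.coeff (d - i) else 0

lemma revP_step (θ : ℂ) (q : Polynomial ℂ) (d : ℕ) (hq : q.coeff (d + 1) = 0) :
    revP ((Polynomial.X - Polynomial.C θ) * q) (d + 1)
      = (1 - PowerSeries.C θ * PowerSeries.X) * revP q d := by
  have hrhs : (1 - PowerSeries.C θ * PowerSeries.X) * revP q d
      = revP q d - PowerSeries.C θ * (revP q d * PowerSeries.X) := by ring
  ext i
  rw [hrhs, map_sub, PowerSeries.coeff_C_mul]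
  have hpoly : ∀ l : ℕ, ((Polynomial.X - Polynomial.C θ) * q).coeff l
      = (Polynomial.X * q).coeff l - θ * q.coeff l := by
    intro l; rw [sub_mul, Polynomial.coeff_sub, Polynomial.coeff_C_mul]
  simp only [revP, PowerSeries.coeff_mk]
  cases i with
  | zero =>
    rw [PowerSeries.coeff_zero_eq_constantCoeff, map_mul, PowerSeries.constantCoeff_X, mul_zero]
    simp only [Nat.zero_le, if_pos, Nat.sub_zero, hpoly, Polynomial.coeff_X_mul, hq, mul_zero,
      sub_zero]
  | succ i =>
    rw [PowerSeries.coeff_succ_mul_X, PowerSeries.coeff_mk]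
    rcases lt_trichotomy i d with h | h | h
    · rw [if_pos (show i + 1 ≤ d + 1 by omega), if_pos (show i + 1 ≤ d by omega),
        if_pos (show i ≤ d by omega), hpoly,
        show d + 1 - (i + 1) = (d - (i + 1)) + 1 by omega, Polynomial.coeff_X_mul,
        show d - (i + 1) + 1 = d - i by omega]
    · subst h
      rw [if_pos (le_refl (i + 1)), if_neg (show ¬ i + 1 ≤ i by omega), if_pos (le_refl i),
        hpoly, show i + 1 - (i + 1) = 0 by omega, show i - i = 0 by omega]
      simp
    · rw [if_neg (show ¬ i + 1 ≤ d + 1 by omega), if_neg (show ¬ i + 1 ≤ d by omega),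
        if_neg (show ¬ i ≤ d by omega)]
      simp

lemma pprodS_eq_revP (M : Multiset ℂ) :
    pprodS M = revP ((M.map fun θ => Polynomial.X - Polynomial.C θ).prod) (Multiset.card M) := by
  induction M using Multiset.induction with
  | empty =>
    ext i
    simp only [pprodS, Multiset.map_zero, Multiset.prod_zero, revP, Multiset.card_zero,
      PowerSeries.coeff_mk, Nat.le_zero]
    split_ifs with h
    · subst h; simp
    · rw [PowerSeries.coeff_one, if_neg h]
  | cons θ M ih =>
    have hq : ((M.map fun θ => Polynomial.X - Polynomial.C θ).prod).coeff (Multiset.card M + 1)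
        = 0 := by
      apply Polynomial.coeff_eq_zero_of_natDegree_lt
      rw [Polynomial.natDegree_multiset_prod_X_sub_C_eq_card]
      omega
    have h1 : pprodS (θ ::ₘ M) = (1 - PowerSeries.C θ * PowerSeries.X) * pprodS M := by
      simp [pprodS, Multiset.map_cons, Multiset.prod_cons]
    rw [h1, ih, Multiset.map_cons, Multiset.prod_cons, Multiset.card_cons, ← revP_step θ _ _ hq]

end GAux

namespace GAux

open scoped PowerSeries

noncomputable def pA (n : ℕ) (a : Fin n → ℤ) : Polynomial ℂ :=
  Polynomial.X ^ n + ∑ i : Fin n,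
    Polynomial.C ((-1 : ℂ) ^ ((i : ℕ) + 1) * (a i : ℂ)) * Polynomial.X ^ (n - ((i : ℕ) + 1))

noncomputable def gS (R : Type*) [CommRing R] (n : ℕ) (b : Fin n → ℤ) : PowerSeries R :=
  PowerSeries.mk fun i => if i = 0 then 1
    else if h : i - 1 < n then (-1 : R) ^ i * ((b ⟨i - 1, h⟩ : ℤ) : R) else 0

variable {n : ℕ} (hn : 1 ≤ n) (a : Fin n → ℤ)

lemma pA_monic : (pA n a).Monic := by
  apply Polynomial.monic_X_pow_add
  apply lt_of_le_of_lt (Polynomial.degree_sum_le _ _)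
  rw [Finset.sup_lt_iff (by exact_mod_cast WithBot.bot_lt_coe n)]
  intro i _
  apply lt_of_le_of_lt (Polynomial.degree_C_mul_X_pow_le _ _)
  exact_mod_cast Nat.cast_lt.mpr (by omega : n - ((i : ℕ) + 1) < n)

include hn in
lemma pA_coeff_sub (i : ℕ) (h1 : 1 ≤ i) (h2 : i ≤ n) :
    (pA n a).coeff (n - i) = (-1 : ℂ) ^ i * (a ⟨i - 1, by omega⟩ : ℂ) := by
  rw [pA, Polynomial.coeff_add, Polynomial.coeff_X_pow, if_neg (by omega : ¬ n - i = n),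
    Polynomial.finset_sum_coeff, zero_add]
  rw [Finset.sum_eq_single (⟨i - 1, by omega⟩ : Fin n)]
  · simp only [Fin.val_mk]
    rw [Polynomial.coeff_C_mul, Polynomial.coeff_X_pow,
      if_pos (by omega : n - i = n - (i - 1 + 1)), mul_one, show (i - 1) + 1 = i by omega]
  · intro k _ hk
    rw [Polynomial.coeff_C_mul, Polynomial.coeff_X_pow, if_neg, mul_zero]
    intro hc
    apply hk
    have hkn : (k : ℕ) < n := k.2
    apply Fin.ext
    simp only [Fin.val_mk]
    omega
  · intro h; exact absurd (Finset.mem_univ _) h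

include hn in
lemma revP_pA : revP (pA n a) n = gS ℂ n a := by
  ext i
  simp only [revP, gS, PowerSeries.coeff_mk]
  rcases Nat.eq_zero_or_pos i with h0 | h0
  · subst h0
    rw [if_pos (Nat.zero_le n), if_pos rfl, Nat.sub_zero, pA, Polynomial.coeff_add,
      Polynomial.coeff_X_pow, if_pos rfl, Polynomial.finset_sum_coeff,
      Finset.sum_eq_zero, add_zero]
    intro k _
    rw [Polynomial.coeff_C_mul, Polynomial.coeff_X_pow, if_neg, mul_zero]
    have := k.2
    omega
  · by_cases hin : i ≤ n
    · rw [if_pos hin, if_neg (by omega : ¬ i = 0), dif_pos (by omega : i - 1 < n)]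
      exact pA_coeff_sub hn a i h0 hin
    · rw [if_neg hin, if_neg (by omega : ¬ i = 0), dif_neg (by omega : ¬ i - 1 < n)]

end GAux

namespace GAux

open scoped PowerSeries

variable {n : ℕ} (hn : 1 ≤ n) (a : Fin n → ℤ)

lemma pA_natDegree : (pA n a).natDegree = n := by
  have hlt : (∑ i : Fin n,
      Polynomial.C ((-1 : ℂ) ^ ((i : ℕ) + 1) * (a i : ℂ)) *
        Polynomial.X ^ (n - ((i : ℕ) + 1))).degree < ((Polynomial.X : Polynomial ℂ) ^ n).degree := by
    rw [Polynomial.degree_X_pow]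
    apply lt_of_le_of_lt (Polynomial.degree_sum_le _ _)
    rw [Finset.sup_lt_iff (by exact_mod_cast WithBot.bot_lt_coe n)]
    intro i _
    apply lt_of_le_of_lt (Polynomial.degree_C_mul_X_pow_le _ _)
    exact_mod_cast Nat.cast_lt.mpr (by omega : n - ((i : ℕ) + 1) < n)
  have : (pA n a).degree = n := by
    rw [pA, Polynomial.degree_add_eq_left_of_degree_lt hlt, Polynomial.degree_X_pow]
  exact Polynomial.natDegree_eq_of_degree_eq_some this

lemma pA_card_roots : Multiset.card (pA n a).roots = n := by
  have h := Polynomial.splits_iff_card_roots.mp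
    (IsAlgClosed.splits (pA n a))
  rwa [pA_natDegree a] at h

lemma pA_prod_roots :
    pA n a = ((pA n a).roots.map fun θ => Polynomial.X - Polynomial.C θ).prod :=
  (IsAlgClosed.splits _).eq_prod_roots_of_monic (pA_monic a)

include hn in
lemma starC :
    gS ℂ n a * psumS ((pA n a).roots)
      = -(PowerSeries.X * (PowerSeries.derivative ℂ (gS ℂ n a))) := by
  have h2 := pprodS_eq_revP ((pA n a).roots)
  rw [pA_card_roots a, ← pA_prod_roots a, revP_pA hn a] at h2
  rw [← h2]
  exact pprodS_star _

lemma gS_map {R S : Type*} [CommRing R] [CommRing S] (f : R →+* S) (b : Fin n → ℤ) :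
    PowerSeries.map f (gS R n b) = gS S n b := by
  ext i
  rw [PowerSeries.coeff_map]
  simp only [gS, PowerSeries.coeff_mk]
  split_ifs with h1 h2
  · exact map_one f
  · rw [map_mul, map_pow, map_neg, map_one, map_intCast]
  · exact map_zero f

lemma map_derivative {R S : Type*} [CommRing R] [CommRing S] (f : R →+* S) (φ : PowerSeries R) :
    PowerSeries.map f (PowerSeries.derivative R φ)
      = PowerSeries.derivative S (PowerSeries.map f φ) := by
  ext i
  simp [PowerSeries.coeff_map, PowerSeries.coeff_derivative]

noncomputable def SQ (s : ℕ → ℤ) : ℚ⟦X⟧ :=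
  PowerSeries.mk fun k => if k = 0 then 0 else ((s k : ℤ) : ℚ)

include hn in
lemma starQ (s : ℕ → ℤ)
    (hs : ∀ k, 1 ≤ k → (s k : ℂ) = ((( pA n a).roots.map fun θ => θ ^ k)).sum) :
    gS ℚ n a * SQ s = -(PowerSeries.X * (PowerSeries.derivative ℚ (gS ℚ n a))) := by
  have hinj : Function.Injective (PowerSeries.map (algebraMap ℚ ℂ)) := by
    intro f g hfg
    ext k
    have := congrArg (PowerSeries.coeff k) hfg
    rw [PowerSeries.coeff_map, PowerSeries.coeff_map] at this
    exact (algebraMap ℚ ℂ).injective this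
  apply hinj
  rw [map_mul, map_neg, map_mul, PowerSeries.map_X, gS_map, map_derivative, gS_map]
  have hSQ : PowerSeries.map (algebraMap ℚ ℂ) (SQ s) = psumS ((pA n a).roots) := by
    ext k
    rw [PowerSeries.coeff_map]
    simp only [SQ, psumS, PowerSeries.coeff_mk]
    split_ifs with h
    · exact map_zero _
    · have := hs k (by omega)
      push_cast
      rw [← this]
      norm_num
  rw [hSQ]
  exact starC hn a

end GAux

namespace GAux

open scoped PowerSeries

noncomputable def logS (w : ℚ⟦X⟧) : ℚ⟦X⟧ :=
  PowerSeries.mk fun k => ∑ r ∈ Finset.range (k + 1),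
    (-1 : ℚ) ^ (r + 1) * (PowerSeries.coeff k (w ^ r)) / r

variable {w : ℚ⟦X⟧} (hw : PowerSeries.constantCoeff w = 0)

include hw in
lemma coeff_pow_mul_eq_zero {r k : ℕ} (h : k < r) (f : ℚ⟦X⟧) :
    PowerSeries.coeff k (w ^ r * f) = 0 := by
  have hX : (PowerSeries.X : ℚ⟦X⟧) ^ r ∣ w ^ r * f :=
    dvd_mul_of_dvd_left (pow_dvd_pow_of_dvd (PowerSeries.X_dvd_iff.mpr hw) r) f
  exact (PowerSeries.X_pow_dvd_iff.mp hX) k h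

include hw in
lemma coeff_pow_eq_zero {r k : ℕ} (h : k < r) :
    PowerSeries.coeff k (w ^ r) = 0 := by
  have := coeff_pow_mul_eq_zero hw h 1
  rwa [mul_one] at this

include hw in
lemma coeff_derivative_logS (k : ℕ) :
    PowerSeries.coeff k (PowerSeries.derivative ℚ (logS w))
      = ∑ r ∈ Finset.range (k + 1),
          (-1 : ℚ) ^ r * PowerSeries.coeff k (w ^ r * PowerSeries.derivative ℚ w) := by
  rw [PowerSeries.coeff_derivative, logS, PowerSeries.coeff_mk, Finset.sum_mul,
    Finset.sum_range_succ']
  have h0 : (-1 : ℚ) ^ (0 + 1) * (PowerSeries.coeff (k + 1) (w ^ 0)) / (0 : ℕ) * (k + 1)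
      = 0 := by
    norm_num
  rw [h0, add_zero]
  apply Finset.sum_congr rfl
  intro r _
  have hD : PowerSeries.derivative ℚ (w ^ (r + 1))
      = (r + 1) • (w ^ r * PowerSeries.derivative ℚ w) := by
    rw [Derivation.leibniz_pow]
    simp [smul_eq_mul, Nat.succ_sub_one]
  have hc : PowerSeries.coeff (k + 1) (w ^ (r + 1)) * (k + 1)
      = (r + 1) * PowerSeries.coeff k (w ^ r * PowerSeries.derivative ℚ w) := by
    have := PowerSeries.coeff_derivative (w ^ (r + 1)) k
    rw [hD, map_nsmul, nsmul_eq_mul] at this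
    push_cast at this
    linarith [this]
  have hr1 : ((r : ℚ) + 1) ≠ 0 := by positivity
  push_cast
  rw [div_mul_eq_mul_div, div_eq_iff hr1]
  linear_combination ((-1 : ℚ) ^ r) * hc

lemma geom_tel (K : ℕ) :
    (∑ r ∈ Finset.range K, (-1 : ℚ⟦X⟧) ^ r * w ^ r * PowerSeries.derivative ℚ w) * (1 + w)
      = PowerSeries.derivative ℚ w
        - (-1 : ℚ⟦X⟧) ^ K * w ^ K * PowerSeries.derivative ℚ w := by
  induction K with
  | zero => simp
  | succ K ih =>
    rw [Finset.sum_range_succ, add_mul, ih]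
    ring

include hw in
lemma key_log :
    (PowerSeries.derivative ℚ (logS w)) * (1 + w) = PowerSeries.derivative ℚ w := by
  ext k
  set D := PowerSeries.derivative ℚ
  set M : ℚ⟦X⟧ := ∑ r ∈ Finset.range (k + 1), (-1 : ℚ⟦X⟧) ^ r * w ^ r * D w with hM
  have hC : ∀ r : ℕ, ((-1 : ℚ⟦X⟧) ^ r) = PowerSeries.C ((-1 : ℚ) ^ r) := by
    intro r; rw [map_pow, map_neg, map_one]
  have hcoeff_eq : ∀ i ≤ k, PowerSeries.coeff i (D (logS w)) = PowerSeries.coeff i M := by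
    intro i hi
    rw [coeff_derivative_logS hw i, hM, map_sum]
    rw [Finset.sum_subset (Finset.range_subset_range.mpr (by omega : i + 1 ≤ k + 1))]
    · apply Finset.sum_congr rfl
      intro r _
      rw [mul_assoc, hC, PowerSeries.coeff_C_mul]
    · intro r _ hr
      have hir : i < r := by simp at hr; omega
      rw [coeff_pow_mul_eq_zero hw hir (D w), mul_zero]
  have h1 : PowerSeries.coeff k ((D (logS w)) * (1 + w))
      = PowerSeries.coeff k (M * (1 + w)) := by
    rw [PowerSeries.coeff_mul, PowerSeries.coeff_mul]
    apply Finset.sum_congr rfl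
    intro p hp
    have hple : p.1 ≤ k := by
      have := Finset.HasAntidiagonal.antidiagonal.fst_le hp
      omega
    rw [hcoeff_eq p.1 hple]
  rw [h1, geom_tel, map_sub]
  have h2 : PowerSeries.coeff k ((-1 : ℚ⟦X⟧) ^ (k + 1) * w ^ (k + 1) * D w) = 0 := by
    rw [mul_assoc, hC, PowerSeries.coeff_C_mul,
      coeff_pow_mul_eq_zero hw (by omega) (D w), mul_zero]
  rw [h2, sub_zero]

section Assemble

open scoped PowerSeries

variable {n : ℕ} (hn : 1 ≤ n) (a : Fin n → ℤ) (j : Fin n)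
  (a' : Fin n → ℤ) (ha' : ∀ i, a' i = if i = j then a i + 4 else a i)

/-- integer inverse of the integer reversed polynomial -/
noncomputable def NZ (n : ℕ) (a : Fin n → ℤ) : ℤ⟦X⟧ := PowerSeries.invOfUnit (gS ℤ n a) 1

lemma gS_constantCoeff {R : Type*} [CommRing R] (b : Fin n → ℤ) :
    PowerSeries.constantCoeff (gS R n b) = 1 := by
  rw [← PowerSeries.coeff_zero_eq_constantCoeff]
  simp [gS]

lemma NZ_mul : NZ n a * gS ℤ n a = 1 :=
  PowerSeries.invOfUnit_mul _ 1 (by rw [gS_constantCoeff, Units.val_one])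

/-- the integer series u with w = 4u (as rationals) -/
noncomputable def uZ (n : ℕ) (a : Fin n → ℤ) (j : Fin n) : ℤ⟦X⟧ :=
  PowerSeries.C ((-1 : ℤ) ^ ((j : ℕ) + 1)) * PowerSeries.X ^ ((j : ℕ) + 1) * NZ n a

noncomputable def wQ (n : ℕ) (a : Fin n → ℤ) (j : Fin n) : ℚ⟦X⟧ :=
  PowerSeries.map (Int.castRingHom ℚ) (PowerSeries.C (4 : ℤ) * uZ n a j)

lemma wQ_constantCoeff : PowerSeries.constantCoeff (wQ n a j) = 0 := by
  have : PowerSeries.constantCoeff (PowerSeries.C (4 : ℤ) * uZ n a j) = 0 := by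
    simp [uZ, map_mul, PowerSeries.constantCoeff_X, zero_pow (by omega : (j : ℕ) + 1 ≠ 0)]
  have h2 : PowerSeries.constantCoeff (wQ n a j)
      = (Int.castRingHom ℚ) (PowerSeries.constantCoeff (PowerSeries.C (4 : ℤ) * uZ n a j)) := by
    rw [wQ, ← PowerSeries.coeff_zero_eq_constantCoeff, PowerSeries.coeff_map,
      PowerSeries.coeff_zero_eq_constantCoeff]
  rw [h2, this, map_zero]

lemma wQ_pow_coeff (r k : ℕ) :
    ∃ z : ℤ, PowerSeries.coeff k ((wQ n a j) ^ r) = 4 ^ r * (z : ℚ) := by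
  refine ⟨PowerSeries.coeff k ((uZ n a j) ^ r), ?_⟩
  rw [wQ, ← map_pow, PowerSeries.coeff_map, mul_pow, ← map_pow, PowerSeries.coeff_C_mul]
  simp only [Int.coe_castRingHom]
  push_cast
  ring

lemma wQ_mul_gS :
    wQ n a j * gS ℚ n a
      = PowerSeries.C (((-1 : ℚ) ^ ((j : ℕ) + 1)) * 4) * PowerSeries.X ^ ((j : ℕ) + 1) := by
  have hgmap : PowerSeries.map (Int.castRingHom ℚ) (gS ℤ n a) = gS ℚ n a := gS_map _ _
  rw [wQ, ← hgmap, ← map_mul]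
  have : PowerSeries.C (4 : ℤ) * uZ n a j * gS ℤ n a
      = PowerSeries.C (((-1 : ℤ) ^ ((j : ℕ) + 1)) * 4) * PowerSeries.X ^ ((j : ℕ) + 1) := by
    rw [uZ]
    have h4 : PowerSeries.C (4 : ℤ) * (PowerSeries.C ((-1 : ℤ) ^ ((j : ℕ) + 1)) *
        PowerSeries.X ^ ((j : ℕ) + 1) * NZ n a) * gS ℤ n a
        = PowerSeries.C (4 : ℤ) * PowerSeries.C ((-1 : ℤ) ^ ((j : ℕ) + 1)) *
          PowerSeries.X ^ ((j : ℕ) + 1) * (NZ n a * gS ℤ n a) := by ring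
    rw [h4, NZ_mul, mul_one, ← map_mul]
    ring_nf
  rw [this, map_mul, map_pow, PowerSeries.map_C, PowerSeries.map_X]
  simp only [Int.coe_castRingHom]
  push_cast
  ring_nf

include ha' in
lemma gS_shift :
    gS ℚ n a' = gS ℚ n a
      + PowerSeries.C (((-1 : ℚ) ^ ((j : ℕ) + 1)) * 4) * PowerSeries.X ^ ((j : ℕ) + 1) := by
  ext i
  rw [map_add, PowerSeries.coeff_C_mul, PowerSeries.coeff_X_pow]
  simp only [gS, PowerSeries.coeff_mk]
  rcases Nat.eq_zero_or_pos i with h0 | h0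
  · subst h0
    rw [if_pos rfl, if_pos rfl, if_neg (by omega : ¬ (0 : ℕ) = (j : ℕ) + 1), mul_zero, add_zero]
  · rw [if_neg (by omega : ¬ i = 0), if_neg (by omega : ¬ i = 0)]
    by_cases hlt : i - 1 < n
    · rw [dif_pos hlt, dif_pos hlt, ha' ⟨i - 1, hlt⟩]
      by_cases hij : (⟨i - 1, hlt⟩ : Fin n) = j
      · have hiv : i = (j : ℕ) + 1 := by
          have := congrArg Fin.val hij
          simp only [Fin.val_mk] at this
          omega
        rw [if_pos hij, if_pos hiv, mul_one]
        push_cast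
        rw [show ((j : ℕ) + 1) = i from hiv.symm]
        ring
      · have hiv : ¬ i = (j : ℕ) + 1 := by
          intro hcc
          apply hij
          apply Fin.ext
          simp only [Fin.val_mk]
          omega
        rw [if_neg hij, if_neg hiv, mul_zero, add_zero]
    · have hiv : ¬ i = (j : ℕ) + 1 := by
        have := j.2
        omega
      rw [dif_neg hlt, dif_neg hlt, if_neg hiv, mul_zero, add_zero]

end Assemble
end GAux

namespace GAux
section Assemble2

open scoped PowerSeries

variable {n : ℕ} (hn : 1 ≤ n) (a : Fin n → ℤ) (j : Fin n)
  (a' : Fin n → ℤ) (ha' : ∀ i, a' i = if i = j then a i + 4 else a i)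

include ha' in
lemma SQ_diff (s s' : ℕ → ℤ)
    (hsQ : gS ℚ n a * SQ s = -(PowerSeries.X * (PowerSeries.derivative ℚ (gS ℚ n a))))
    (hsQ' : gS ℚ n a' * SQ s' = -(PowerSeries.X * (PowerSeries.derivative ℚ (gS ℚ n a')))) :
    SQ s - SQ s' = PowerSeries.X * (PowerSeries.derivative ℚ (logS (wQ n a j))) := by
  set D := PowerSeries.derivative ℚ with hD
  set G0 := gS ℚ n a with hG0d
  set G1 := gS ℚ n a' with hG1d
  set w := wQ n a j with hwd
  set q := PowerSeries.C (((-1 : ℚ) ^ ((j : ℕ) + 1)) * 4) * PowerSeries.X ^ ((j : ℕ) + 1)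
    with hqd
  set L := logS w with hLd
  have hkey : (D L) * (1 + w) = D w := key_log (wQ_constantCoeff a j)
  have hG1 : G1 = G0 + q := gS_shift a j a' ha'
  have hwq : w * G0 = q := wQ_mul_gS a j
  have hq2 : q = G1 - G0 := by rw [hG1]; ring
  have hDq : D q = D G1 - D G0 := by rw [hq2, map_sub]
  have e1 : (1 + w) * G0 = G1 := by rw [hG1]; linear_combination hwq
  have e2 : D w * G0 + w * D G0 = D q := by
    have h : D (w * G0) = D q := by rw [hwq]
    rw [Derivation.leibniz, smul_eq_mul, smul_eq_mul] at h
    linear_combination h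
  have step1 : D L * (G0 * G1) = D w * (G0 * G0) := by
    linear_combination (-(D L * G0)) * e1 + (G0 * G0) * hkey
  have step2 : D w * (G0 * G0) = D G1 * G0 - G1 * D G0 := by
    linear_combination G0 * e2 - D G0 * hwq + G0 * hDq - D G0 * hq2
  have hDL : D L * (G0 * G1) = D G1 * G0 - G1 * D G0 := step1.trans step2
  have hprod : (SQ s - SQ s') * (G0 * G1) = (PowerSeries.X * D L) * (G0 * G1) := by
    linear_combination G1 * hsQ - G0 * hsQ' - PowerSeries.X * hDL
  have hne : (G0 * G1 : ℚ⟦X⟧) ≠ 0 := by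
    intro h0
    have hc : PowerSeries.constantCoeff (G0 * G1) = 1 := by
      rw [map_mul, hG0d, hG1d, gS_constantCoeff, gS_constantCoeff, one_mul]
    rw [h0, map_zero] at hc
    exact zero_ne_one hc
  exact mul_right_cancel₀ hne hprod

end Assemble2
end GAux

namespace GAux
section Valuation

open scoped PowerSeries

variable {n : ℕ} (hn : 1 ≤ n) (a : Fin n → ℤ) (j : Fin n)

lemma sum_odd_denom (S : Finset ℕ) (f : ℕ → ℚ)
    (h : ∀ r ∈ S, ∃ b z : ℤ, Odd b ∧ (b : ℚ) * f r = 4 * z) :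
    ∃ b z : ℤ, Odd b ∧ (b : ℚ) * (∑ r ∈ S, f r) = 4 * z := by
  classical
  induction S using Finset.cons_induction with
  | empty => exact ⟨1, 0, odd_one, by simp⟩
  | cons r S hrS ih =>
    obtain ⟨b1, z1, hb1, hz1⟩ := h r (Finset.mem_cons_self _ _)
    obtain ⟨b2, z2, hb2, hz2⟩ := ih fun x hx => h x (Finset.mem_cons.mpr (Or.inr hx))
    refine ⟨b1 * b2, b2 * z1 + b1 * z2, hb1.mul hb2, ?_⟩
    rw [Finset.sum_cons]
    push_cast
    linear_combination (b2 : ℚ) * hz1 + (b1 : ℚ) * hz2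

lemma logS_coeff_val (k : ℕ) :
    ∃ b z : ℤ, Odd b ∧ (b : ℚ) * PowerSeries.coeff k (logS (wQ n a j)) = 4 * z := by
  rw [logS, PowerSeries.coeff_mk]
  apply sum_odd_denom
  intro r _
  rcases Nat.eq_zero_or_pos r with h0 | h0
  · subst h0
    refine ⟨1, 0, odd_one, by norm_num⟩
  · obtain ⟨z0, hz0⟩ := wQ_pow_coeff a j r k
    set e := padicValNat 2 r with he
    set o := r / 2 ^ e with ho
    have hro : r = 2 ^ e * o := (Nat.ordProj_mul_ordCompl_eq_self r 2).symm
    have hoodd : Odd o := by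
      rw [Nat.odd_iff, ← Nat.two_dvd_ne_zero]
      exact Nat.not_dvd_ordCompl Nat.prime_two (by omega)
    have her : e < r := by
      have h1 : 2 ^ e ≤ r := Nat.le_of_dvd (by omega) (Nat.ordProj_dvd r 2)
      have h2 : e < 2 ^ e := Nat.lt_two_pow_self
      omega
    refine ⟨(o : ℤ), (-1) ^ (r + 1) * 2 ^ (2 * r - e - 2) * z0, hoodd.natCast, ?_⟩
    have h4 : (4 : ℚ) ^ r = 2 ^ e * (4 * 2 ^ (2 * r - e - 2)) := by
      rw [show (4 : ℚ) = 2 ^ 2 by norm_num, ← pow_mul, show (2:ℚ)^2 = 4 by norm_num]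
      rw [show (4:ℚ) * 2 ^ (2 * r - e - 2) = 2 ^ 2 * 2 ^ (2 * r - e - 2) by norm_num,
        ← pow_add, ← pow_add]
      congr 1
      omega
    have hrq : (r : ℚ) = 2 ^ e * (o : ℚ) := by
      rw [hro]
      push_cast
      ring
    have ho0 : (o : ℚ) ≠ 0 := by
      have : o ≠ 0 := by rintro h; rw [h] at hoodd; simp at hoodd
      exact_mod_cast this
    have h2e : ((2 : ℚ) ^ e) ≠ 0 := by positivity
    rw [hz0, hrq, h4]
    field_simp
    push_cast
    ring
end Valuation
end GAux

namespace GAux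
section Final

open scoped PowerSeries

variable {n : ℕ} (hn : 1 ≤ n) (a : Fin n → ℤ) (j : Fin n)
  (a' : Fin n → ℤ) (ha' : ∀ i, a' i = if i = j then a i + 4 else a i)

include hn ha' in
lemma power_sum_dvd (s s' : ℕ → ℤ)
    (hs : ∀ k, 1 ≤ k → (s k : ℂ) = (((pA n a).roots.map fun θ => θ ^ k)).sum)
    (hs' : ∀ k, 1 ≤ k → (s' k : ℂ) = (((pA n a').roots.map fun θ => θ ^ k)).sum)
    (k : ℕ) (hk : 1 ≤ k) :
    (2 : ℤ) ^ (padicValNat 2 k + 2) ∣ (s k - s' k) := by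
  have hdiff := SQ_diff a j a' ha' s s' (starQ hn a s hs) (starQ hn a' s' hs')
  set L := logS (wQ n a j) with hL
  obtain ⟨k', rfl⟩ : ∃ k', k = k' + 1 := ⟨k - 1, by omega⟩
  have hco : ((s (k' + 1) : ℚ) - s' (k' + 1))
      = PowerSeries.coeff (k' + 1) L * (k' + 1) := by
    have h1 := congrArg (PowerSeries.coeff (k' + 1)) hdiff
    rw [map_sub] at h1
    rw [mul_comm] at h1
    rw [PowerSeries.coeff_succ_mul_X, PowerSeries.coeff_derivative] at h1
    simpa [SQ, PowerSeries.coeff_mk] using h1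
  obtain ⟨b, z, hbodd, hbz⟩ := logS_coeff_val a j (k' + 1)
  have hq : (b : ℚ) * ((s (k' + 1) : ℚ) - s' (k' + 1)) = 4 * z * (k' + 1) := by
    rw [hco]
    linear_combination ((k' : ℚ) + 1) * hbz
  have hZ : b * (s (k' + 1) - s' (k' + 1)) = 4 * z * (k' + 1) := by
    exact_mod_cast hq
  set v := padicValNat 2 (k' + 1) with hv
  have hdvd1 : (2 : ℤ) ^ (v + 2) ∣ b * (s (k' + 1) - s' (k' + 1)) := by
    rw [hZ]
    have h2v : (2 : ℤ) ^ v ∣ ((k' : ℤ) + 1) := by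
      have := pow_padicValNat_dvd (p := 2) (n := k' + 1)
      exact_mod_cast Int.natCast_dvd_natCast.mpr this
    obtain ⟨t, ht⟩ := h2v
    exact ⟨z * t, by rw [ht]; ring⟩
  have hb2 : IsCoprime ((2 : ℤ) ^ (v + 2)) b := by
    apply IsCoprime.pow_left
    rw [Int.isCoprime_iff_gcd_eq_one]
    have hno : Odd b.natAbs := Int.natAbs_odd.mpr hbodd
    have h2 : ¬ 2 ∣ b.natAbs := by
      rw [Nat.two_dvd_ne_zero, ← Nat.odd_iff]
      exact hno
    have := (Nat.prime_two.coprime_iff_not_dvd).mpr h2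
    simpa [Int.gcd] using this
  exact hb2.dvd_of_dvd_mul_left hdvd1

end Final
end GAux

theorem G_mod_two_four_periodic_in_coefficients (n : ℕ) (hn : 1 ≤ n)
    (a : Fin n → ℤ) (j : Fin n)
    (a' : Fin n → ℤ) (ha' : ∀ i, a' i = if i = j then a i + 4 else a i)
    (s s' g g' : ℕ → ℤ)
    (hs : ∀ k, 1 ≤ k → (s k : ℂ) = rootPowerSum n a k)
    (hs' : ∀ k, 1 ≤ k → (s' k : ℂ) = rootPowerSum n a' k)
    (hg : ∀ m, 1 ≤ m → 2 ^ (padicValNat 2 m + 1) * g m = s (2 * m) - s m)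
    (hg' : ∀ m, 1 ≤ m → 2 ^ (padicValNat 2 m + 1) * g' m = s' (2 * m) - s' m)
    (m : ℕ) (hm : 1 ≤ m) (hme : Even m) :
    ∃ c : ℤ, g m - g' m = 2 * c := by
  have hsP : ∀ k, 1 ≤ k → (s k : ℂ) = (((GAux.pA n a).roots.map fun θ => θ ^ k)).sum := hs
  have hsP' : ∀ k, 1 ≤ k → (s' k : ℂ) = (((GAux.pA n a').roots.map fun θ => θ ^ k)).sum := hs'
  set v := padicValNat 2 m with hv
  have h1 : (2 : ℤ) ^ (v + 2) ∣ (s m - s' m) :=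
    GAux.power_sum_dvd hn a j a' ha' s s' hsP hsP' m hm
  have h2m : padicValNat 2 (2 * m) = v + 1 := by
    rw [padicValNat.mul (by omega) (by omega), padicValNat.self (by omega)]
    omega
  have h2 : (2 : ℤ) ^ (v + 2) ∣ (s (2 * m) - s' (2 * m)) := by
    have := GAux.power_sum_dvd hn a j a' ha' s s' hsP hsP' (2 * m) (by omega)
    rw [h2m] at this
    exact dvd_trans (pow_dvd_pow 2 (by omega)) this
  have heq : (2 : ℤ) ^ (v + 1) * (g m - g' m)
      = (s (2 * m) - s' (2 * m)) - (s m - s' m) := by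
    have e1 := hg m hm
    have e2 := hg' m hm
    rw [← hv] at e1 e2
    linarith [e1, e2]
  have h3 : (2 : ℤ) ^ (v + 2) ∣ (2 : ℤ) ^ (v + 1) * (g m - g' m) := by
    rw [heq]
    exact dvd_sub h2 h1
  obtain ⟨c, hc⟩ := h3
  refine ⟨c, ?_⟩
  have h2v1 : ((2 : ℤ) ^ (v + 1)) ≠ 0 := by positivity
  apply mul_left_cancel₀ h2v1
  rw [hc]
  ring
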